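/- Let f ∈ C^α(ℝ^m) (i.e., f is Hölder continuous with exponent α ∈ (0,1] and seminorm [f]_α) and let A ⊆ ℝ^m be closed. Then for every β ≥ 0 there is a constant C(α, β) such that ∫_ℝ H^β(f^{-1}({t}) ∩ A) dt ≤ C·[f]_α·H^{α+β}(A), where H^s denotes s-dimensional Hausdorff measure. -/

import Mathlib

open Real MeasureTheory Set NNReal ENNReal Filter Topology

set_option maxHeartbeats 1000000

theorem main_est (α : ℝ≥0) (hα : 0 < α) (β : ℝ≥0) (m : ℕ)
    (f : EuclideanSpace ℝ (Fin m) → ℝ) (K : ℝ≥0) (hf : HolderWith K α f)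
    (A : Set (EuclideanSpace ℝ (Fin m))) (ε : ℝ≥0∞) (hε : 0 < ε)
    (hfin : μH[(α : ℝ) + (β : ℝ)] A < ∞) :
    (∫⁻ t : ℝ, μH[(β : ℝ)] (f ⁻¹' {t} ∩ A)) ≤
      (K : ℝ≥0∞) * (μH[(α : ℝ) + (β : ℝ)] A + ε) := by
  set γ : ℝ := (α : ℝ) + (β : ℝ) with hγdef
  have hγpos : (0 : ℝ) < γ := by positivity
  set δ : ℕ → ℝ≥0∞ := fun n => ((n : ℝ≥0∞) + 1)⁻¹ with hδdef
  have hδpos : ∀ n, 0 < δ n := fun n => ENNReal.inv_pos.2 (by simp)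
  have hδtend : Tendsto δ atTop (𝓝 0) :=
    (ENNReal.tendsto_inv_nat_nhds_zero.comp (tendsto_add_atTop_nat 1)).congr
      (fun n => by simp [hδdef])
  -- Step 1: choose covers
  have key : ∀ n : ℕ, ∃ B : ℕ → Set (EuclideanSpace ℝ (Fin m)),
      (A ⊆ ⋃ j, B j) ∧ (∀ j, EMetric.diam (B j) ≤ δ n) ∧
      ∑' j, EMetric.diam (B j) ^ γ ≤ μH[γ] A + ε := by
    intro n
    have h1 : (⨅ (t : ℕ → Set (EuclideanSpace ℝ (Fin m))) (_ : A ⊆ ⋃ k, t k)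
        (_ : ∀ k, EMetric.diam (t k) ≤ δ n),
        ∑' k, ⨆ _ : (t k).Nonempty, EMetric.diam (t k) ^ γ) ≤ μH[γ] A := by
      rw [Measure.hausdorffMeasure_apply]
      exact le_iSup₂ (f := fun r (_ : 0 < r) =>
        ⨅ (t : ℕ → Set (EuclideanSpace ℝ (Fin m))) (_ : A ⊆ ⋃ k, t k) (_ : ∀ k, EMetric.diam (t k) ≤ r),
          ∑' k, ⨆ _ : (t k).Nonempty, EMetric.diam (t k) ^ γ) (δ n) (hδpos n)
    have h2 := h1.trans_lt (ENNReal.lt_add_right hfin.ne hε.ne')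
    simp only [iInf_lt_iff] at h2
    obtain ⟨B, hBcov, hBdiam, hBsum⟩ := h2
    refine ⟨B, hBcov, hBdiam, le_trans (le_of_eq (tsum_congr fun j => ?_)) hBsum.le⟩
    rcases (B j).eq_empty_or_nonempty with h | h
    · simp [h, ENNReal.zero_rpow_of_pos hγpos]
      exact Or.inl ⟨Metric.ediam_empty, hγpos⟩
    · simp [h]
  choose B hBcov hBdiam hBsum using key
  -- the measurable majorants
  set I : ℕ → ℕ → Set ℝ := fun n j => toMeasurable volume (f '' (B n j ∩ A)) with hIdef
  set h : ℕ → ℝ → ℝ≥0∞ := fun n t =>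
    ∑' j, EMetric.diam (B n j) ^ (β : ℝ) * (I n j).indicator 1 t with hhdef
  have hImeas : ∀ n j, MeasurableSet (I n j) := fun n j => measurableSet_toMeasurable _ _
  have hhmeas : ∀ n, Measurable (h n) := fun n =>
    Measurable.ennreal_tsum fun j =>
      ((measurable_one.indicator (hImeas n j)).const_mul _)
  -- Step 3: pointwise bound
  have hpt : ∀ t : ℝ, μH[(β : ℝ)] (f ⁻¹' {t} ∩ A) ≤ liminf (fun n => h n t) atTop := by
    intro t
    rw [Measure.hausdorffMeasure_apply]
    refine iSup₂_le fun r hr => ?_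
    refine le_liminf_of_le (by isBoundedDefault) ?_
    filter_upwards [hδtend.eventually_lt_const hr] with n hn
    set c : ℕ → Set (EuclideanSpace ℝ (Fin m)) := fun j => B n j ∩ f ⁻¹' {t} ∩ A with hcdef
    have hcov : f ⁻¹' {t} ∩ A ⊆ ⋃ j, c j := by
      rintro x ⟨hxt, hxA⟩
      obtain ⟨j, hj⟩ := mem_iUnion.1 (hBcov n hxA)
      exact mem_iUnion.2 ⟨j, ⟨hj, hxt⟩, hxA⟩
    have hsub : ∀ j, c j ⊆ B n j := fun j => inter_subset_left.trans inter_subset_left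
    have hdiam : ∀ j, EMetric.diam (c j) ≤ r := fun j =>
      (EMetric.diam_mono (hsub j)).trans ((hBdiam n j).trans hn.le)
    refine le_trans (iInf_le_of_le c (iInf_le_of_le hcov (iInf_le_of_le hdiam le_rfl))) ?_
    refine ENNReal.tsum_le_tsum fun j => ?_
    refine iSup_le fun hne => ?_
    obtain ⟨x, ⟨hxB, hxt⟩, hxA⟩ := hne
    have htI : t ∈ I n j := subset_toMeasurable _ _ ⟨x, ⟨hxB, hxA⟩, hxt⟩
    rw [indicator_of_mem htI, Pi.one_apply, mul_one]
    exact ENNReal.rpow_le_rpow (EMetric.diam_mono (hsub j)) β.coe_nonneg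
  -- Step 4: integral bound for each n
  have hint : ∀ n, (∫⁻ t, h n t) ≤ (K : ℝ≥0∞) * (μH[γ] A + ε) := by
    intro n
    have h1 : (∫⁻ t, h n t) =
        ∑' j, EMetric.diam (B n j) ^ (β : ℝ) * volume (I n j) := by
      rw [hhdef]
      simp only
      rw [lintegral_tsum fun j =>
        ((measurable_one.indicator (hImeas n j)).const_mul _).aemeasurable]
      congr 1
      funext j
      rw [lintegral_const_mul _ (measurable_one.indicator (hImeas n j)),
        lintegral_indicator (hImeas n j)]
      simp
    rw [h1]
    have h2 : ∀ j, EMetric.diam (B n j) ^ (β : ℝ) * volume (I n j) ≤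
        (K : ℝ≥0∞) * EMetric.diam (B n j) ^ γ := by
      intro j
      have hv : volume (I n j) ≤ (K : ℝ≥0∞) * EMetric.diam (B n j) ^ (α : ℝ) := by
        rw [hIdef]
        simp only
        rw [measure_toMeasurable]
        refine (Real.volume_le_diam _).trans ((hf.ediam_image_le _).trans ?_)
        exact mul_le_mul_right (ENNReal.rpow_le_rpow
          (EMetric.diam_mono inter_subset_left) α.coe_nonneg) _
      calc EMetric.diam (B n j) ^ (β : ℝ) * volume (I n j)
          ≤ EMetric.diam (B n j) ^ (β : ℝ) *
            ((K : ℝ≥0∞) * EMetric.diam (B n j) ^ (α : ℝ)) := mul_le_mul_right hv _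
        _ = (K : ℝ≥0∞) * EMetric.diam (B n j) ^ γ := by
            rw [hγdef, ENNReal.rpow_add_of_nonneg _ _ α.coe_nonneg β.coe_nonneg]
            ring
    calc ∑' j, EMetric.diam (B n j) ^ (β : ℝ) * volume (I n j)
        ≤ ∑' j, (K : ℝ≥0∞) * EMetric.diam (B n j) ^ γ := ENNReal.tsum_le_tsum h2
      _ = (K : ℝ≥0∞) * ∑' j, EMetric.diam (B n j) ^ γ := ENNReal.tsum_mul_left
      _ ≤ (K : ℝ≥0∞) * (μH[γ] A + ε) := mul_le_mul_right (hBsum n) _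
  calc (∫⁻ t : ℝ, μH[(β : ℝ)] (f ⁻¹' {t} ∩ A))
      ≤ ∫⁻ t, liminf (fun n => h n t) atTop := lintegral_mono hpt
    _ ≤ liminf (fun n => ∫⁻ t, h n t) atTop := lintegral_liminf_le hhmeas
    _ ≤ (K : ℝ≥0∞) * (μH[γ] A + ε) := by
        refine liminf_le_of_le (by isBoundedDefault) ?_
        intro b hb
        obtain ⟨n, hn⟩ := hb.exists
        exact hn.trans (hint n)

theorem stmt5 (α : ℝ≥0) (hα : 0 < α) (hα1 : α ≤ 1) (β : ℝ≥0) :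
    ∃ C : ℝ≥0, ∀ (m : ℕ) (f : EuclideanSpace ℝ (Fin m) → ℝ) (K : ℝ≥0),
      HolderWith K α f →
      ∀ A : Set (EuclideanSpace ℝ (Fin m)), IsClosed A →
        (∫⁻ t : ℝ, Measure.hausdorffMeasure (β : ℝ) (f ⁻¹' {t} ∩ A))
          ≤ (C : ℝ≥0∞) * (K : ℝ≥0∞)
            * Measure.hausdorffMeasure ((α : ℝ) + (β : ℝ)) A := by
  refine ⟨1, fun m f K hf A hA => ?_⟩
  rw [ENNReal.coe_one, one_mul]
  rcases eq_or_ne K 0 with hK0 | hK0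
  · -- f is constant
    subst hK0
    have hc : ∀ x y, f x = f y := by
      intro x y
      have := hf x y
      simp only [ENNReal.coe_zero, zero_mul, nonpos_iff_eq_zero, edist_eq_zero] at this
      exact this
    set c := f 0 with hcdef
    have hfun : (fun t : ℝ => μH[(β : ℝ)] (f ⁻¹' {t} ∩ A)) =
        ({c} : Set ℝ).indicator (fun _ => μH[(β : ℝ)] A) := by
      funext t
      rcases eq_or_ne t c with rfl | ht
      · have : f ⁻¹' {c} = univ := by
          ext x; simp [hc x 0, hcdef]
        simp [this]
      · have : f ⁻¹' {t} = ∅ := by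
          ext x
          simp only [mem_preimage, mem_singleton_iff, mem_empty_iff_false, iff_false]
          intro hx
          exact ht (hx ▸ hc 0 x ▸ rfl)
        rw [this, empty_inter, indicator_of_notMem (by simpa using ht)]
        simp
    rw [hfun, lintegral_indicator (measurableSet_singleton c)]
    simp [Real.volume_singleton]
  · refine ENNReal.le_of_forall_pos_le_add fun ε hε hb => ?_
    have hKtop : (K : ℝ≥0∞) ≠ ∞ := ENNReal.coe_ne_top
    have hfin : μH[(α : ℝ) + (β : ℝ)] A < ∞ := by
      by_contra hcon
      rw [not_lt, top_le_iff] at hcon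
      rw [hcon, ENNReal.mul_top (by exact_mod_cast hK0)] at hb
      exact (lt_irrefl _ hb).elim
    have hε' : (0 : ℝ≥0∞) < (ε : ℝ≥0∞) / K :=
      ENNReal.div_pos (by exact_mod_cast hε.ne') hKtop
    have := main_est α hα β m f K hf A _ hε' hfin
    refine this.trans ?_
    rw [mul_add, ENNReal.mul_div_cancel (by exact_mod_cast hK0) hKtop]
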